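/- Let N = 4L+1. Define w_n = u_n + N^{-1/2} S(2L+2n) u_{-n} for 0 ≤ n ≤ L, where u_n(k) = S(3L+n+k)S(3L+n-k). Then each w_n is an eigenvector of the centered DFT F with eigenvalue 1, and the w_n (0 ≤ n ≤ L) are linearly independent; hence the eigenspace of F for eigenvalue 1 has dimension at least L+1. -/

import Mathlib

open scoped Real BigOperators

/-- `S N k = ∏_{j=1}^{k} 2 sin(π j / N)`, with `S N 0 = 1` (empty product);
note `S N k = 0` for `k ≥ N`. -/
noncomputable def S (N : ℕ) (k : ℕ) : ℝ :=
  ∏ j ∈ Finset.Icc 1 k, 2 * Real.sin (Real.pi * j / N)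

/-- The index set `I_N = {-M+1, ..., -M+N}` with `M = ⌊(N+1)/2⌋`.
For `N = 4L+1` this is `{-2L, ..., 2L}`. -/
noncomputable def Iset (N : ℕ) : Finset ℤ :=
  Finset.Icc (1 - (((N + 1) / 2 : ℕ) : ℤ)) ((N : ℤ) - (((N + 1) / 2 : ℕ) : ℤ))

/-- The centered discrete Fourier transform. -/
noncomputable def dft (N : ℕ) (u : ℤ → ℂ) (l : ℤ) : ℂ :=
  (Real.sqrt N : ℂ)⁻¹ *
    ∑ k ∈ Iset N, Complex.exp (-2 * Real.pi * Complex.I * k * l / N) * u k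

/-- The even vectors `u_n(k) = S(3L+n+k) S(3L+n-k)` (for `N = 4L+1`). -/
noncomputable def uvec (L : ℕ) (n k : ℤ) : ℝ :=
  S (4 * L + 1) (3 * L + n + k).toNat * S (4 * L + 1) (3 * L + n - k).toNat

/-- The odd vectors `v_n(k) = sin(2πk/N) S(3L+n+k) S(3L+n-k)` (for `N = 4L+1`). -/
noncomputable def vvec (L : ℕ) (n k : ℤ) : ℝ :=
  Real.sin (2 * Real.pi * k / (4 * L + 1)) * uvec L n k
/-- The centered DFT as a linear operator on `ℂ^N` (functions on `I_N`). -/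
noncomputable def Fop (N : ℕ) :
    ({k : ℤ // k ∈ Iset N} → ℂ) →ₗ[ℂ] ({k : ℤ // k ∈ Iset N} → ℂ) where
  toFun u l := (Real.sqrt N : ℂ)⁻¹ *
    ∑ k : {k : ℤ // k ∈ Iset N},
      Complex.exp (-2 * Real.pi * Complex.I * k.1 * l.1 / N) * u k
  map_add' u v := by
    funext l
    simp only [Pi.add_apply, mul_add, Finset.sum_add_distrib]
  map_smul' c u := by
    funext l
    simp only [Pi.smul_apply, smul_eq_mul, RingHom.id_apply]
    rw [Finset.mul_sum, Finset.mul_sum, Finset.mul_sum]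
    exact Finset.sum_congr rfl fun k _ => by ring

/-- `w_n = u_n + N^{-1/2} S(2L+2n) u_{-n}`. -/
noncomputable def wvec (L : ℕ) (n k : ℤ) : ℝ :=
  uvec L n k + (Real.sqrt (4 * L + 1))⁻¹ * S (4 * L + 1) (2 * L + 2 * n).toNat * uvec L (-n) k


open Finset

namespace St14




/-- Gaussian binomial-ish coefficients over ℂ via Pascal recursion. -/
noncomputable def gb (q : ℂ) : ℕ → ℕ → ℂ
  | 0, 0 => 1
  | 0, _+1 => 0
  | M+1, 0 => gb q M 0
  | M+1, k+1 => gb q M (k+1) + q ^ (M-k) * gb q M k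

lemma gb_zero (q : ℂ) (M : ℕ) : gb q M 0 = 1 := by
  induction M with
  | zero => rfl
  | succ M ih => rw [gb]; exact ih

lemma gb_eq_zero (q : ℂ) : ∀ M k, M < k → gb q M k = 0 := by
  intro M
  induction M with
  | zero => intro k hk; match k, hk with | k+1, _ => rfl
  | succ M ih =>
    intro k hk
    match k, hk with
    | k+1, hk =>
      rw [gb, ih (k+1) (by omega), ih k (by omega), mul_zero, add_zero]

/-- The q-binomial theorem. -/
lemma qbt (q x : ℂ) : ∀ M, ∏ j ∈ range M, (1 + x * q ^ j)
    = ∑ k ∈ range (M+1), gb q M k * q ^ (k.choose 2) * x ^ k := by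
  intro M
  induction M with
  | zero => simp [gb]
  | succ M ih =>
    rw [prod_range_succ, ih, mul_add, mul_one, mul_comm _ (x * q ^ M), mul_sum]
    have h1 : ∑ k ∈ range (M+1), x * q ^ M * (gb q M k * q ^ (k.choose 2) * x ^ k)
        = ∑ k ∈ range (M+1), gb q M k * q ^ ((k+1).choose 2) * x ^ (k+1) * q ^ (M - k) := by
      refine Finset.sum_congr rfl fun k hk => ?_
      have hkM : k ≤ M := by simpa using Nat.lt_succ_iff.mp (mem_range.mp hk)
      have h2 : (k+1).choose 2 = k.choose 2 + k := by
        rw [Nat.choose_succ_succ]; simp [Nat.choose_one_right, Nat.add_comm]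
      have hq : q ^ (M-k) * q ^ k = q ^ M := by rw [← pow_add]; congr 1; omega
      rw [h2, pow_add, pow_succ]
      linear_combination (-(gb q M k * q ^ (k.choose 2) * x ^ k * x)) * hq
    rw [h1]
    rw [Finset.sum_range_succ' (fun k => gb q (M+1) k * q ^ (k.choose 2) * x ^ k) (M+1)]
    have h4 : ∀ k ∈ range (M+1), gb q (M+1) (k+1) * q ^ ((k+1).choose 2) * x ^ (k+1)
        = gb q M (k+1) * q ^ ((k+1).choose 2) * x ^ (k+1)
          + gb q M k * q ^ ((k+1).choose 2) * x ^ (k+1) * q ^ (M-k) := by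
      intro k hk
      rw [gb]; ring
    rw [Finset.sum_congr rfl h4, Finset.sum_add_distrib]
    have h5 : ∑ k ∈ range (M+1), gb q M (k+1) * q ^ ((k+1).choose 2) * x ^ (k+1)
        = ∑ k ∈ range (M+2), gb q M k * q ^ (k.choose 2) * x ^ k
          - gb q M 0 * q ^ (Nat.choose 0 2) * x ^ 0 := by
      rw [Finset.sum_range_succ' (fun k => gb q M k * q ^ (k.choose 2) * x ^ k) (M+1)]
      ring
    have h7 : gb q M (M+1) = 0 := gb_eq_zero q M (M+1) (by omega)
    rw [h5, Finset.sum_range_succ (fun k => gb q M k * q ^ (k.choose 2) * x ^ k) (M+1), h7]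
    have hg : gb q (M+1) 0 = 1 := gb_zero q (M+1)
    have hg0 : gb q M 0 = 1 := gb_zero q M
    rw [hg, hg0]
    ring

/-- Pochhammer-type product `∏_{j=1}^{M} (1 - q^j)`. -/
noncomputable def poch (q : ℂ) (M : ℕ) : ℂ := ∏ j ∈ range M, (1 - q ^ (j+1))

lemma poch_succ (q : ℂ) (M : ℕ) : poch q (M+1) = poch q M * (1 - q ^ (M+1)) := by
  rw [poch, poch, prod_range_succ]

lemma gb_mul_poch (q : ℂ) : ∀ M k, k ≤ M →
    gb q M k * (poch q k * poch q (M - k)) = poch q M := by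
  intro M
  induction M with
  | zero => intro k hk; interval_cases k; simp [gb, poch]
  | succ M ih =>
    intro k hk
    cases k with
    | zero => rw [gb_zero, Nat.sub_zero]; simp [poch]
    | succ k =>
      rcases Nat.lt_or_ge (k+1) (M+1) with h | h
      · have hkM : k + 1 ≤ M := by omega
        have e1 : M + 1 - (k+1) = (M - (k+1)) + 1 := by omega
        have e2 : M - (k+1) + 1 = M - k := by omega
        rw [gb, e1, poch_succ q (M-(k+1)), e2]
        have t1 : gb q M (k+1) * (poch q (k+1) * poch q (M - (k+1))) = poch q M := ih (k+1) hkM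
        have t2 : gb q M k * (poch q k * poch q (M - k)) = poch q M := ih k (by omega)
        have t3 : poch q (k+1) = poch q k * (1 - q^(k+1)) := poch_succ q k
        have t4 : poch q (M-k) = poch q (M-(k+1)) * (1 - q^(M-k)) := by
          rw [← e2, poch_succ, e2]
        have t5 : q^(M-k) * q^(k+1) = q^(M+1) := by rw [← pow_add]; congr 1; omega
        have t6 : poch q (M+1) = poch q M * (1 - q^(M+1)) := poch_succ q M
        rw [t6, ← t5]
        linear_combination (1-q^(M-k))*t1 + q^(M-k)*(1-q^(k+1))*t2
          + q^(M-k)*gb q M k*poch q (M-(k+1))*(1-q^(M-k))*t3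
          - q^(M-k)*gb q M k*(1-q^(k+1))*poch q k*t4
      · have hk1 : M = k := by omega
        subst hk1
        have h6 : gb q M (M+1) = 0 := gb_eq_zero q M (M+1) (by omega)
        have e1 : M + 1 - (M+1) = 0 := by omega
        have e2 : M - M = 0 := by omega
        have t1 : gb q M M * (poch q M * poch q 0) = poch q M := by
          have := ih M (le_refl M); rwa [e2] at this
        rw [gb, h6, e1, e2, pow_zero, zero_add, one_mul, poch_succ]
        have hp0 : poch q 0 = 1 := by simp [poch]
        rw [hp0, mul_one]
        rw [hp0, mul_one] at t1
        rw [← mul_assoc, t1]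



noncomputable def zet (L : ℕ) : ℂ := Complex.exp (Real.pi * Complex.I / (4*L+1))

lemma zet_ne_zero (L : ℕ) : zet L ≠ 0 := Complex.exp_ne_zero _

lemma zmul (L : ℕ) (a b : ℤ) : zet L ^ (a + b) = zet L ^ a * zet L ^ b :=
  zpow_add₀ (zet_ne_zero L) a b

lemma zet_zpow_exp (L : ℕ) (a : ℤ) :
    zet L ^ a = Complex.exp (a * (Real.pi * Complex.I / (4*L+1))) := by
  show Complex.exp _ ^ a = _
  exact (Complex.exp_int_mul _ a).symm

lemma NC_ne_zero (L : ℕ) : (4*(L:ℂ)+1) ≠ 0 := by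
  have : ((4*L+1 : ℕ) : ℂ) ≠ 0 := Nat.cast_ne_zero.mpr (by omega)
  push_cast at this
  exact this

lemma zet_pow_N (L : ℕ) : zet L ^ ((4*L+1 : ℕ) : ℤ) = -1 := by
  rw [zet_zpow_exp]
  have h : (((4*L+1:ℕ):ℤ):ℂ) * (Real.pi * Complex.I / (4*(L:ℂ)+1)) = Real.pi * Complex.I := by
    have := NC_ne_zero L
    push_cast
    field_simp
  push_cast at h ⊢
  rw [h, Complex.exp_pi_mul_I]

lemma zet_pow_N_mul (L : ℕ) (t : ℤ) : zet L ^ (((4*L+1 : ℕ):ℤ) * t) = (-1 : ℂ) ^ t := by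
  rw [zpow_mul, zet_pow_N]

lemma zet_pow_N_neg (L : ℕ) : zet L ^ (-((4*L+1 : ℕ) : ℤ)) = -1 := by
  rw [zpow_neg, zet_pow_N]
  norm_num

noncomputable def ff (L : ℕ) (j : ℤ) : ℂ := zet L ^ j - zet L ^ (-j)

lemma ff_reflect (L : ℕ) (j : ℤ) : ff L ((4*L+1 : ℕ) - j) = ff L j := by
  unfold ff
  rw [show ((4*L+1:ℕ):ℤ) - j = ((4*L+1:ℕ):ℤ) + (-j) from by ring, zmul, zet_pow_N,
      show -(((4*L+1:ℕ):ℤ) + (-j)) = -((4*L+1:ℕ):ℤ) + j from by ring, zmul, zet_pow_N_neg]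
  ring

lemma ff_zero (L : ℕ) : ff L 0 = 0 := by simp [ff]

lemma ff_N (L : ℕ) : ff L ((4*L+1 : ℕ) : ℤ) = 0 := by
  unfold ff
  rw [zet_pow_N, zet_pow_N_neg]
  ring

lemma neg_I_ff (L : ℕ) (j : ℤ) :
    (-Complex.I) * ff L j = ((2 * Real.sin (Real.pi * j / (4*L+1)) : ℝ) : ℂ) := by
  unfold ff
  rw [zet_zpow_exp, zet_zpow_exp]
  have h : (j : ℂ) * (Real.pi * Complex.I / (4*(L:ℂ)+1)) =
      ((Real.pi * j / (4*L+1) : ℝ) : ℂ) * Complex.I := by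
    have := NC_ne_zero L
    push_cast
    field_simp
  have h2 : ((-j : ℤ) : ℂ) * (Real.pi * Complex.I / (4*(L:ℂ)+1)) =
      -(((Real.pi * j / (4*L+1) : ℝ) : ℂ) * Complex.I) := by
    rw [show ((-j:ℤ):ℂ) = -(j:ℂ) from by push_cast; ring, neg_mul, h]
  push_cast at h h2 ⊢
  rw [h, h2, ← neg_mul, Complex.exp_mul_I, Complex.exp_mul_I]
  simp only [Complex.cos_neg, Complex.sin_neg, Complex.ofReal_sin, Complex.ofReal_mul,
    Complex.ofReal_div, Complex.ofReal_intCast, Complex.ofReal_ofNat]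
  push_cast
  linear_combination (-2*Complex.sin (Real.pi * (j:ℂ) / (4*(L:ℂ)+1))) * Complex.I_mul_I

noncomputable def TT (L : ℕ) (z : ℤ) : ℂ := ∏ j ∈ Finset.Ioc (0:ℤ) z, ff L j

lemma TT_eq_zero (L : ℕ) (z : ℤ) (hz : ((4*L+1 : ℕ) : ℤ) ≤ z) : TT L z = 0 :=
  Finset.prod_eq_zero (Finset.mem_Ioc.mpr ⟨by exact_mod_cast Nat.succ_pos (4*L), hz⟩) (ff_N L)

lemma TT_mul (L : ℕ) (a b : ℤ) (h0 : 0 ≤ a) (hab : a ≤ b) :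
    TT L a * ∏ j ∈ Finset.Ioc a b, ff L j = TT L b := by
  unfold TT
  have hset : Finset.Ioc (0:ℤ) b = Finset.Ioc 0 a ∪ Finset.Ioc a b :=
    (Finset.Ioc_union_Ioc_eq_Ioc h0 hab).symm
  have hdisj : Disjoint (Finset.Ioc (0:ℤ) a) (Finset.Ioc a b) := by
    simp only [Finset.disjoint_left, Finset.mem_Ioc]
    intro x hx hx2
    omega
  rw [hset, Finset.prod_union hdisj]

lemma TT_refl_aux (L : ℕ) (z : ℤ) (h0 : 0 ≤ z) (h1 : z ≤ 4*L) :
    TT L z * TT L (4*L - z) = TT L (4*L) := by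
  have key : TT L (4*L - z) = ∏ j ∈ Finset.Ioc z (4*L), ff L j := by
    unfold TT
    apply Finset.prod_nbij' (i := fun j => ((4*L+1 : ℕ) : ℤ) - j) (j := fun j => ((4*L+1 : ℕ) : ℤ) - j)
    · intro a ha; simp only [Finset.mem_Ioc] at *; push_cast at *; omega
    · intro a ha; simp only [Finset.mem_Ioc] at *; push_cast at *; omega
    · intro a _; push_cast; ring
    · intro a _; push_cast; ring
    · intro a _; exact (ff_reflect L a).symm
  rw [key]
  exact TT_mul L z (4*L) h0 h1



lemma ff_form (L : ℕ) (j : ℤ) : ff L j = -(zet L ^ (-j)) * (1 - zet L ^ (2*j)) := by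
  have h : zet L ^ (-j) * zet L ^ (2*j) = zet L ^ j := by
    rw [← zmul]; congr 1; ring
  unfold ff
  linear_combination (-1 : ℂ) * h

lemma TT_succ (L : ℕ) (M : ℕ) : TT L ((M:ℤ)+1) = TT L (M:ℤ) * ff L ((M:ℤ)+1) := by
  rw [← TT_mul L (M:ℤ) ((M:ℤ)+1) (by positivity) (by omega)]
  have : Finset.Ioc (M:ℤ) ((M:ℤ)+1) = {(M:ℤ)+1} := by
    ext x; simp only [Finset.mem_Ioc, Finset.mem_singleton]; omega
  rw [this, Finset.prod_singleton]

lemma q_pow (L : ℕ) (n : ℕ) : (zet L ^ 2) ^ n = zet L ^ (2*(n:ℤ)) := by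
  rw [← pow_mul, ← zpow_natCast, show ((2*n : ℕ):ℤ) = 2*(n:ℤ) from by omega]

lemma TT_poch (L : ℕ) : ∀ M : ℕ, TT L (M:ℤ)
    = (-1:ℂ)^M * zet L ^ (-((M*(M+1)/2 : ℕ) : ℤ)) * poch (zet L ^ 2) M := by
  intro M
  induction M with
  | zero => simp [TT, poch]
  | succ M ih =>
    have hstep : TT L ((M+1 : ℕ):ℤ) = TT L (M:ℤ) * ff L ((M:ℤ)+1) := by
      rw [show ((M+1:ℕ):ℤ) = (M:ℤ)+1 from by push_cast; ring]
      exact TT_succ L M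
    rw [hstep, ih, ff_form, poch_succ, q_pow]
    have harith : ((M+1)*(M+1+1)/2 : ℕ) = (M*(M+1)/2 : ℕ) + (M+1) := by
      obtain ⟨t, ht⟩ := Nat.even_mul_succ_self M
      have hc : (M+1)*(M+1+1) = M*(M+1) + 2*(M+1) := by ring
      rw [hc, ht]
      omega
    have hz : zet L ^ (-((M*(M+1)/2 : ℕ) : ℤ)) * (-(zet L ^ (-((M:ℤ)+1))))
        = (-1:ℂ) * zet L ^ (-(((M+1)*(M+1+1)/2 : ℕ) : ℤ)) := by
      rw [harith, mul_neg, ← zmul]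
      push_cast
      ring_nf
    have hq : zet L ^ (2*((M:ℤ)+1)) = zet L ^ (2*((M+1:ℕ):ℤ)) := by push_cast; ring_nf
    calc (-1:ℂ)^M * zet L ^ (-((M*(M+1)/2 : ℕ) : ℤ)) * poch (zet L ^ 2) M *
          (-(zet L ^ (-((M:ℤ)+1))) * (1 - zet L ^ (2*((M:ℤ)+1))))
        = (-1:ℂ)^M * (zet L ^ (-((M*(M+1)/2 : ℕ) : ℤ)) * (-(zet L ^ (-((M:ℤ)+1))))) *
          (poch (zet L ^ 2) M * (1 - zet L ^ (2*((M:ℤ)+1)))) := by ring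
      _ = (-1:ℂ)^(M+1) * zet L ^ (-(((M+1)*(M+1+1)/2 : ℕ) : ℤ)) *
          (poch (zet L ^ 2) M * (1 - zet L ^ (2*((M+1:ℕ):ℤ)))) := by rw [hz, hq]; ring
      _ = _ := by rw [← q_pow]

lemma zet_sq (L : ℕ) : zet L ^ (2:ℕ) = Complex.exp (2 * Real.pi * Complex.I / (4*(L:ℂ)+1)) := by
  rw [zet, ← Complex.exp_nat_mul]
  congr 1
  push_cast
  ring

lemma poch_full (L : ℕ) : poch (zet L ^ 2) (4*L) = ((4*L+1 : ℕ) : ℂ) := by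
  have hprim : IsPrimitiveRoot (zet L ^ 2) (4*L+1) := by
    rw [zet_sq]
    have := Complex.isPrimitiveRoot_exp (4*L+1) (by omega)
    convert this using 3
    push_cast
    ring
  have := hprim.prod_one_sub_pow_eq_order
  rw [poch]
  rw [this]
  push_cast
  ring

lemma TT_4L (L : ℕ) : TT L ((4*L : ℕ) : ℤ) = ((4*L+1 : ℕ) : ℂ) := by
  rw [TT_poch, poch_full]
  have h1 : ((4*L)*(4*L+1)/2 : ℕ) = (4*L+1) * (2*L) := by
    have hc : (4*L)*(4*L+1) = 2*((4*L+1)*(2*L)) := by ring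
    rw [hc, Nat.mul_div_cancel_left _ (by norm_num : 0 < 2)]
  have h2 : (-(((4*L)*(4*L+1)/2 : ℕ) : ℤ)) = ((4*L+1 : ℕ) : ℤ) * (-(2*(L:ℤ))) := by
    rw [h1]; push_cast; ring
  rw [h2, zet_pow_N_mul]
  have h3 : ((-1:ℂ)) ^ (-(2*(L:ℤ))) = 1 := by
    rw [zpow_neg, show (2*(L:ℤ)) = ((2*L : ℕ) : ℤ) from by push_cast; ring, zpow_natCast,
      pow_mul]
    norm_num
  rw [h3]
  have h4 : ((-1:ℂ)) ^ (4*L) = 1 := by rw [pow_mul]; norm_num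
  rw [h4]
  ring

lemma TT_refl (L : ℕ) (z : ℤ) (h0 : 0 ≤ z) (h1 : z ≤ 4*L) :
    TT L z * TT L (4*L - z) = ((4*L+1 : ℕ) : ℂ) := by
  have := TT_refl_aux L z h0 h1
  rw [this, show ((4*L : ℤ)) = ((4*L : ℕ) : ℤ) from by push_cast; ring, TT_4L]

lemma TT_ne_zero (L : ℕ) (z : ℤ) (h0 : 0 ≤ z) (h1 : z ≤ 4*L) : TT L z ≠ 0 := by
  intro h
  have := TT_refl L z h0 h1
  rw [h, zero_mul] at this
  have : ((4*L+1 : ℕ) : ℂ) ≠ 0 := Nat.cast_ne_zero.mpr (by omega)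
  simp_all

lemma poch_ne_zero (L : ℕ) (M : ℕ) (hM : M ≤ 4*L) : poch (zet L ^ 2) M ≠ 0 := by
  intro h
  have h2 := TT_poch L M
  rw [h, mul_zero] at h2
  exact TT_ne_zero L M (by positivity) (by exact_mod_cast hM) h2

lemma zpow_pow (L : ℕ) (e : ℤ) (n : ℕ) : (zet L ^ e) ^ n = zet L ^ (e*n) := by
  rw [← zpow_natCast (zet L ^ e), ← zpow_mul]

lemma zprod (L : ℕ) (g : ℕ → ℤ) (M : ℕ) :
    ∏ j ∈ range M, zet L ^ (g j) = zet L ^ (∑ j ∈ range M, g j) := by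
  induction M with
  | zero => simp
  | succ M ih => rw [prod_range_succ, sum_range_succ, ih, ← zmul]

lemma hC2 (j : ℕ) : 2*((j.choose 2 : ℕ):ℤ) = (j:ℤ)*((j:ℤ)-1) := by
  induction j with
  | zero => simp
  | succ j ih =>
    rw [Nat.choose_succ_succ, Nat.choose_one_right]
    push_cast
    push_cast at ih
    linarith [ih]

lemma TT_pair (L m : ℕ) (k : ℤ) (h1 : -(m:ℤ) ≤ k) (h2 : k ≤ m) :
    poch (zet L^2) ((m:ℤ)-k).toNat * poch (zet L^2) ((m:ℤ)+k).toNat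
      = zet L ^ ((m:ℤ)^2 + k^2 + m) * (TT L ((m:ℤ)-k) * TT L ((m:ℤ)+k)) := by
  set a := ((m:ℤ)-k).toNat with hadef
  set b := ((m:ℤ)+k).toNat with hbdef
  have ha : (a:ℤ) = (m:ℤ)-k := Int.toNat_of_nonneg (by omega)
  have hb : (b:ℤ) = (m:ℤ)+k := Int.toNat_of_nonneg (by omega)
  rw [show (m:ℤ)-k = (a:ℤ) from ha.symm, show (m:ℤ)+k = (b:ℤ) from hb.symm,
    TT_poch L a, TT_poch L b]
  have hA : 2*((a*(a+1)/2 : ℕ):ℤ) = (a:ℤ)*((a:ℤ)+1) := by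
    have ht : (a*(a+1)) % 2 = 0 := Nat.even_iff.mp (Nat.even_mul_succ_self a)
    have h2 : 2*((a*(a+1)/2 : ℕ):ℤ) = ((a*(a+1) : ℕ):ℤ) := by omega
    rw [h2]
    push_cast
    ring
  have hB : 2*((b*(b+1)/2 : ℕ):ℤ) = (b:ℤ)*((b:ℤ)+1) := by
    have ht : (b*(b+1)) % 2 = 0 := Nat.even_iff.mp (Nat.even_mul_succ_self b)
    have h2 : 2*((b*(b+1)/2 : ℕ):ℤ) = ((b*(b+1) : ℕ):ℤ) := by omega
    rw [h2]
    push_cast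
    ring
  have hab : a + b = 2*m := by omega
  have hsign : (-1:ℂ)^a * (-1:ℂ)^b = 1 := by
    rw [← pow_add, hab, pow_mul]
    norm_num
  have hphase : zet L ^ (-((a*(a+1)/2 : ℕ):ℤ)) * zet L ^ (-((b*(b+1)/2 : ℕ):ℤ))
      = zet L ^ (-((m:ℤ)^2+k^2+m)) := by
    rw [← zmul]
    congr 1
    rw [ha] at hA
    rw [hb] at hB
    have h2s : 2*(((a*(a+1)/2 : ℕ):ℤ) + ((b*(b+1)/2 : ℕ):ℤ)) = 2*((m:ℤ)^2+k^2+m) := by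
      linear_combination hA + hB
    linarith [h2s]
  have hinv : zet L ^ ((m:ℤ)^2+k^2+m) * zet L ^ (-((m:ℤ)^2+k^2+m)) = 1 := by
    rw [← zmul, show (m:ℤ)^2+k^2+m + (-((m:ℤ)^2+k^2+m)) = 0 from by ring, zpow_zero]
  symm
  calc zet L ^ ((m:ℤ)^2+k^2+m) *
        (((-1:ℂ)^a * zet L ^ (-((a*(a+1)/2 : ℕ):ℤ)) * poch (zet L^2) a) *
         ((-1:ℂ)^b * zet L ^ (-((b*(b+1)/2 : ℕ):ℤ)) * poch (zet L^2) b))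
      = (zet L ^ ((m:ℤ)^2+k^2+m) *
          (zet L ^ (-((a*(a+1)/2 : ℕ):ℤ)) * zet L ^ (-((b*(b+1)/2 : ℕ):ℤ)))) *
        (((-1:ℂ)^a * (-1:ℂ)^b) * (poch (zet L^2) a * poch (zet L^2) b)) := by ring
    _ = (zet L ^ ((m:ℤ)^2+k^2+m) * zet L ^ (-((m:ℤ)^2+k^2+m))) *
        (1 * (poch (zet L^2) a * poch (zet L^2) b)) := by rw [hphase, hsign]
    _ = poch (zet L^2) a * poch (zet L^2) b := by rw [hinv]; ring

lemma sum_Icc_to_range (m : ℕ) (F : ℤ → ℂ) :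
    ∑ k ∈ Finset.Icc (-(m:ℤ)) (m:ℤ), F k = ∑ j ∈ range (2*m+1), F ((j:ℤ) - m) := by
  refine Finset.sum_nbij' (fun k => (k + m).toNat) (fun j => (j:ℤ) - (m:ℤ)) ?_ ?_ ?_ ?_ ?_
  · intro k hk; simp only [Finset.mem_Icc] at hk; simp only [Finset.mem_range]; omega
  · intro j hj; simp only [Finset.mem_range] at hj; simp only [Finset.mem_Icc]; omega
  · intro k hk; simp only [Finset.mem_Icc] at hk; omega
  · intro j hj; simp only [Finset.mem_range] at hj; omega
  · intro k hk; simp only [Finset.mem_Icc] at hk; congr 1; omega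

lemma prod_Ioc_to_range (c : ℤ) (m : ℕ) (F : ℤ → ℂ) :
    ∏ s ∈ Finset.Ioc c (c + 2*m), F s = ∏ j ∈ range (2*m), F (c + 2*m - j) := by
  refine Finset.prod_nbij' (fun s => (c + 2*m - s).toNat) (fun j => c + 2*m - (j:ℤ)) ?_ ?_ ?_ ?_ ?_
  · intro s hs; simp only [Finset.mem_Ioc] at hs; simp only [Finset.mem_range]; omega
  · intro j hj; simp only [Finset.mem_range] at hj; simp only [Finset.mem_Ioc]; omega
  · intro s hs; simp only [Finset.mem_Ioc] at hs; omega
  · intro j hj; simp only [Finset.mem_range] at hj; omega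
  · intro s hs; simp only [Finset.mem_Ioc] at hs; congr 1; omega

lemma gauss_int (n : ℕ) : (∑ j ∈ range n, (j:ℤ)) * 2 = (n:ℤ) * ((n:ℤ) - 1) := by
  induction n with
  | zero => simp
  | succ n ih =>
    rw [sum_range_succ, add_mul]
    push_cast
    push_cast at ih
    linarith [ih]

lemma one_add_zet (L : ℕ) (r s : ℤ) (hrs : r = ((4*L+1:ℕ):ℤ) - 2*s) :
    1 + zet L ^ r = zet L ^ (-s) * ff L s := by
  have h1 : zet L ^ r = -(zet L ^ (-(2*s))) := by
    rw [hrs, show ((4*L+1:ℕ):ℤ) - 2*s = ((4*L+1:ℕ):ℤ) + (-(2*s)) from by ring, zmul, zet_pow_N]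
    ring
  have h2 : zet L ^ (-s) * zet L ^ s = 1 := by
    rw [← zmul, show -s + s = 0 from by ring, zpow_zero]
  have h3 : zet L ^ (-s) * zet L ^ (-s) = zet L ^ (-(2*s)) := by
    rw [← zmul]; congr 1; ring
  unfold ff
  rw [h1]
  linear_combination h3 - h2

lemma neg_one_zpow_neg (m : ℕ) : ((-1:ℂ))^(-(m:ℤ)) = (-1:ℂ)^m := by
  rw [zpow_neg, zpow_natCast]
  refine inv_eq_of_mul_eq_one_right ?_
  rw [← pow_add, ← two_mul, pow_mul]
  norm_num

lemma poch_2m (L m : ℕ) :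
    poch (zet L ^ 2) (2*m) = zet L ^ (((2*m)*(2*m+1)/2 : ℕ) : ℤ) * TT L ((2*m : ℕ):ℤ) := by
  rw [TT_poch L (2*m)]
  rw [show ((-1:ℂ))^(2*m) = 1 from by rw [pow_mul]; norm_num]
  rw [show (1:ℂ) * (zet L ^ (-(((2*m)*(2*m+1)/2 : ℕ):ℤ))) * poch (zet L ^2) (2*m)
      = (zet L ^ (-(((2*m)*(2*m+1)/2 : ℕ):ℤ))) * poch (zet L ^2) (2*m) from by ring]
  rw [← mul_assoc, ← zmul, show (((2*m)*(2*m+1)/2 : ℕ):ℤ) + (-(((2*m)*(2*m+1)/2 : ℕ):ℤ)) = 0 from by ring,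
    zpow_zero, one_mul]

lemma main_T (L m : ℕ) (hm : m ≤ 2*L) (l : ℤ) (hl1 : -(2*(L:ℤ)) ≤ l) (hl2 : l ≤ 2*(L:ℤ)) :
    ∑ k ∈ Finset.Icc (-(2*(L:ℤ))) (2*(L:ℤ)),
        zet L ^ (-(2*k*l)) * (TT L (4*(L:ℤ) - m + k) * TT L (4*(L:ℤ) - m - k))
      = (-1:ℂ)^m * TT L (4*(L:ℤ) - 2*m) *
        (TT L (2*(L:ℤ) + m + l) * TT L (2*(L:ℤ) + m - l)) := by
  have hNneC : ((4*L+1:ℕ):ℂ) ≠ 0 := Nat.cast_ne_zero.mpr (by omega)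
  have hPm : poch (zet L ^ 2) (2*m) ≠ 0 := poch_ne_zero L (2*m) (by omega)
  -- Step A : restrict the sum to |k| ≤ m
  have hstep1 : ∑ k ∈ Finset.Icc (-(2*(L:ℤ))) (2*(L:ℤ)),
        zet L ^ (-(2*k*l)) * (TT L (4*(L:ℤ) - m + k) * TT L (4*(L:ℤ) - m - k))
      = ∑ k ∈ Finset.Icc (-(m:ℤ)) (m:ℤ),
        zet L ^ (-(2*k*l)) * (TT L (4*(L:ℤ) - m + k) * TT L (4*(L:ℤ) - m - k)) := by
    symm
    apply Finset.sum_subset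
    · intro x hx
      simp only [Finset.mem_Icc] at *
      omega
    · intro x hx hnx
      simp only [Finset.mem_Icc] at hx hnx
      by_cases hgt : (m:ℤ) < x
      · rw [TT_eq_zero L (4*(L:ℤ) - m + x) (by push_cast; omega), zero_mul, mul_zero]
      · rw [TT_eq_zero L (4*(L:ℤ) - m - x) (by push_cast; omega), mul_zero, mul_zero]
  rw [hstep1]
  -- Step B : termwise identity, multiplied by poch
  have hterm : ∀ k ∈ Finset.Icc (-(m:ℤ)) (m:ℤ),
      (TT L (4*(L:ℤ) - m + k) * TT L (4*(L:ℤ) - m - k)) * poch (zet L ^ 2) (2*m)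
      = ((4*L+1:ℕ):ℂ) * ((4*L+1:ℕ):ℂ) *
        (zet L ^ ((m:ℤ)^2+k^2+m) * gb (zet L ^ 2) (2*m) (((m:ℤ)+k).toNat)) := by
    intro k hk
    simp only [Finset.mem_Icc] at hk
    obtain ⟨hk1, hk2⟩ := hk
    have r1 : TT L (4*(L:ℤ) - m + k) * TT L ((m:ℤ) - k) = ((4*L+1:ℕ):ℂ) := by
      have := TT_refl L (4*(L:ℤ) - m + k) (by omega) (by omega)
      rw [show (4*(L:ℤ) - (4*(L:ℤ) - m + k)) = (m:ℤ) - k from by ring] at this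
      exact this
    have r2 : TT L (4*(L:ℤ) - m - k) * TT L ((m:ℤ) + k) = ((4*L+1:ℕ):ℂ) := by
      have := TT_refl L (4*(L:ℤ) - m - k) (by omega) (by omega)
      rw [show (4*(L:ℤ) - (4*(L:ℤ) - m - k)) = (m:ℤ) + k from by ring] at this
      exact this
    have r3 := TT_pair L m k hk1 hk2
    have hble : ((m:ℤ)+k).toNat ≤ 2*m := by omega
    have r4 := gb_mul_poch (zet L ^ 2) (2*m) (((m:ℤ)+k).toNat) hble
    rw [show (2*m - ((m:ℤ)+k).toNat : ℕ) = ((m:ℤ)-k).toNat from by omega] at r4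
    linear_combination (-(TT L (4*(L:ℤ) - m + k) * TT L (4*(L:ℤ) - m - k))) * r4
      + (TT L (4*(L:ℤ) - m + k) * TT L (4*(L:ℤ) - m - k) * gb (zet L ^ 2) (2*m) (((m:ℤ)+k).toNat)) * r3
      + (zet L ^ ((m:ℤ)^2+k^2+m) * gb (zet L ^ 2) (2*m) (((m:ℤ)+k).toNat) *
          TT L (4*(L:ℤ) - m - k) * TT L ((m:ℤ) + k)) * r1
      + (zet L ^ ((m:ℤ)^2+k^2+m) * gb (zet L ^ 2) (2*m) (((m:ℤ)+k).toNat) * ((4*L+1:ℕ):ℂ)) * r2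
  -- Step C : the inner phase/gb sum
  have hSj : (∑ j ∈ range (2*m), (j:ℤ)) = 2*(m:ℤ)^2 - m := by
    have := gauss_int (2*m)
    push_cast at this ⊢
    nlinarith [this]
  have hinner : (∑ k ∈ Finset.Icc (-(m:ℤ)) (m:ℤ),
        zet L ^ ((m:ℤ)^2+k^2+m - 2*k*l) * gb (zet L ^ 2) (2*m) (((m:ℤ)+k).toNat))
      = zet L ^ (2*(m:ℤ)^2 - 4*(L:ℤ)*m) *
        ∏ s ∈ Finset.Ioc (2*(L:ℤ) + l - m) (2*(L:ℤ) + l - m + 2*m), ff L s := by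
    rw [sum_Icc_to_range m (fun k => zet L ^ ((m:ℤ)^2+k^2+m - 2*k*l) * gb (zet L ^ 2) (2*m) (((m:ℤ)+k).toNat))]
    have e2 : ∀ j ∈ range (2*m+1),
        zet L ^ ((m:ℤ)^2+((j:ℤ)-m)^2+m - 2*((j:ℤ)-m)*l) * gb (zet L ^ 2) (2*m) (((m:ℤ)+((j:ℤ)-m)).toNat)
        = zet L ^ (2*(m:ℤ)^2+2*m*l+m) *
          (gb (zet L ^ 2) (2*m) j * (zet L ^ 2) ^ (j.choose 2) * (zet L ^ (1-2*(m:ℤ)-2*l)) ^ j) := by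
      intro j hj
      rw [show (((m:ℤ)+((j:ℤ)-m)).toNat) = j from by omega, q_pow, zpow_pow]
      rw [show zet L ^ (2*(m:ℤ)^2+2*m*l+m) *
            (gb (zet L ^ 2) (2*m) j * zet L ^ (2*((j.choose 2 : ℕ):ℤ)) * zet L ^ ((1-2*(m:ℤ)-2*l)*j))
          = gb (zet L ^ 2) (2*m) j *
            (zet L ^ (2*(m:ℤ)^2+2*m*l+m) * zet L ^ (2*((j.choose 2 : ℕ):ℤ)) * zet L ^ ((1-2*(m:ℤ)-2*l)*j))
          from by ring, ← zmul, ← zmul, mul_comm]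
      congr 2
      linear_combination (-1 : ℤ) * hC2 j
    rw [Finset.sum_congr rfl e2, ← Finset.mul_sum, ← qbt (zet L ^ 2) (zet L ^ (1-2*(m:ℤ)-2*l)) (2*m)]
    have e3 : ∀ j ∈ range (2*m),
        (1 + zet L ^ (1-2*(m:ℤ)-2*l) * (zet L ^ 2) ^ j)
        = zet L ^ (-(2*(L:ℤ) + l - m + 2*m - j)) * ff L (2*(L:ℤ) + l - m + 2*m - j) := by
      intro j hj
      have hx : zet L ^ (1-2*(m:ℤ)-2*l) * (zet L ^ 2) ^ j = zet L ^ (1-2*(m:ℤ)-2*l+2*j) := by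
        rw [q_pow, ← zmul]
      rw [hx]
      apply one_add_zet
      push_cast
      ring
    rw [Finset.prod_congr rfl e3, Finset.prod_mul_distrib,
      zprod L (fun j => -(2*(L:ℤ) + l - m + 2*m - j)) (2*m),
      ← prod_Ioc_to_range (2*(L:ℤ) + l - m) m (ff L)]
    have e4 : (∑ j ∈ range (2*m), (-(2*(L:ℤ) + l - m + 2*m - (j:ℤ))))
        = -(4*(L:ℤ)*m + 2*m*l + m) := by
      have e5 : ∀ j ∈ range (2*m), (-(2*(L:ℤ) + l - m + 2*m - (j:ℤ)))
          = (-(2*(L:ℤ) + l + m)) + (j:ℤ) := by intro j _; ring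
      rw [Finset.sum_congr rfl e5, Finset.sum_add_distrib, Finset.sum_const, card_range,
        nsmul_eq_mul, hSj]
      push_cast
      ring
    rw [e4, ← mul_assoc, ← zmul]
    congr 2
    ring
  -- combine B and C : sum * poch = N² ζ^{2m²-4Lm} ∏ ff
  have hsum : (∑ k ∈ Finset.Icc (-(m:ℤ)) (m:ℤ),
        zet L ^ (-(2*k*l)) * (TT L (4*(L:ℤ) - m + k) * TT L (4*(L:ℤ) - m - k)))
        * poch (zet L ^ 2) (2*m)
      = ((4*L+1:ℕ):ℂ) * ((4*L+1:ℕ):ℂ) * (zet L ^ (2*(m:ℤ)^2 - 4*(L:ℤ)*m) *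
        ∏ s ∈ Finset.Ioc (2*(L:ℤ) + l - m) (2*(L:ℤ) + l - m + 2*m), ff L s) := by
    rw [Finset.sum_mul]
    have e1 : ∀ k ∈ Finset.Icc (-(m:ℤ)) (m:ℤ),
        zet L ^ (-(2*k*l)) * (TT L (4*(L:ℤ) - m + k) * TT L (4*(L:ℤ) - m - k)) * poch (zet L ^ 2) (2*m)
        = ((4*L+1:ℕ):ℂ) * ((4*L+1:ℕ):ℂ) *
          (zet L ^ ((m:ℤ)^2+k^2+m - 2*k*l) * gb (zet L ^ 2) (2*m) (((m:ℤ)+k).toNat)) := by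
      intro k hk
      have h2 := hterm k hk
      have hz : zet L ^ (-(2*k*l)) * zet L ^ ((m:ℤ)^2+k^2+m) = zet L ^ ((m:ℤ)^2+k^2+m - 2*k*l) := by
        rw [← zmul]; congr 1; ring
      calc zet L ^ (-(2*k*l)) * (TT L (4*(L:ℤ) - m + k) * TT L (4*(L:ℤ) - m - k)) * poch (zet L ^ 2) (2*m)
          = zet L ^ (-(2*k*l)) * ((TT L (4*(L:ℤ) - m + k) * TT L (4*(L:ℤ) - m - k)) * poch (zet L ^ 2) (2*m)) := by ring
        _ = zet L ^ (-(2*k*l)) * (((4*L+1:ℕ):ℂ) * ((4*L+1:ℕ):ℂ) *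
              (zet L ^ ((m:ℤ)^2+k^2+m) * gb (zet L ^ 2) (2*m) (((m:ℤ)+k).toNat))) := by rw [h2]
        _ = ((4*L+1:ℕ):ℂ) * ((4*L+1:ℕ):ℂ) *
              ((zet L ^ (-(2*k*l)) * zet L ^ ((m:ℤ)^2+k^2+m)) * gb (zet L ^ 2) (2*m) (((m:ℤ)+k).toNat)) := by ring
        _ = _ := by rw [hz]
    rw [Finset.sum_congr rfl e1, ← Finset.mul_sum, hinner]
  -- final case split on c = 2L + l - m
  by_cases hc : 0 ≤ 2*(L:ℤ) + l - m
  · -- main case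
    have hc4 : 2*(L:ℤ) + l - m ≤ 4*L := by omega
    have hTc : TT L (2*(L:ℤ) + l - m) ≠ 0 := TT_ne_zero L _ hc hc4
    have hProdIoc : TT L (2*(L:ℤ) + l - m) *
        (∏ s ∈ Finset.Ioc (2*(L:ℤ) + l - m) (2*(L:ℤ) + l - m + 2*m), ff L s)
        = TT L (2*(L:ℤ) + l - m + 2*m) := TT_mul L _ _ hc (by omega)
    have hrefl2m : TT L ((2*m:ℕ):ℤ) * TT L (4*(L:ℤ) - 2*m) = ((4*L+1:ℕ):ℂ) := by
      have := TT_refl L ((2*m:ℕ):ℤ) (by positivity) (by push_cast; omega)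
      rw [show (4*(L:ℤ) - ((2*m:ℕ):ℤ)) = 4*(L:ℤ) - 2*m from by push_cast; ring] at this
      exact this
    have hreflc : TT L (2*(L:ℤ) + l - m) * TT L (2*(L:ℤ) + m - l) = ((4*L+1:ℕ):ℂ) := by
      have := TT_refl L (2*(L:ℤ) + l - m) hc hc4
      rw [show (4*(L:ℤ) - (2*(L:ℤ) + l - m)) = 2*(L:ℤ) + m - l from by ring] at this
      exact this
    -- phase : ζ^{2m²-4Lm} = (-1)^m ζ^{D}, D = (2m)(2m+1)/2
    have hD : 2*(((2*m)*(2*m+1)/2 : ℕ):ℤ) = (2*(m:ℤ))*(2*m+1) := by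
      have ht : ((2*m)*(2*m+1)) % 2 = 0 := Nat.even_iff.mp (Nat.even_mul_succ_self (2*m))
      have h2 : 2*(((2*m)*(2*m+1)/2 : ℕ):ℤ) = (((2*m)*(2*m+1) : ℕ):ℤ) := by omega
      rw [h2]; push_cast; ring
    have hphase : zet L ^ (2*(m:ℤ)^2 - 4*(L:ℤ)*m)
        = (-1:ℂ)^m * zet L ^ ((((2*m)*(2*m+1)/2 : ℕ)):ℤ) := by
      have hsplit : (2*(m:ℤ)^2 - 4*(L:ℤ)*m)
          = ((4*L+1:ℕ):ℤ) * (-(m:ℤ)) + (((2*m)*(2*m+1)/2 : ℕ):ℤ) := by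
        have hcast : ((4*L+1:ℕ):ℤ) = 4*(L:ℤ)+1 := by push_cast; ring
        rw [hcast]
        nlinarith [hD]
      rw [hsplit, zmul, zet_pow_N_mul, neg_one_zpow_neg]
    -- cancel poch and TT c
    apply mul_right_cancel₀ hPm
    apply mul_right_cancel₀ hTc
    rw [hsum]
    calc ((4*L+1:ℕ):ℂ) * ((4*L+1:ℕ):ℂ) * (zet L ^ (2*(m:ℤ)^2 - 4*(L:ℤ)*m) *
          ∏ s ∈ Finset.Ioc (2*(L:ℤ) + l - m) (2*(L:ℤ) + l - m + 2*m), ff L s) * TT L (2*(L:ℤ) + l - m)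
        = ((4*L+1:ℕ):ℂ) * ((4*L+1:ℕ):ℂ) * zet L ^ (2*(m:ℤ)^2 - 4*(L:ℤ)*m) *
          (TT L (2*(L:ℤ) + l - m) *
            ∏ s ∈ Finset.Ioc (2*(L:ℤ) + l - m) (2*(L:ℤ) + l - m + 2*m), ff L s) := by ring
      _ = ((4*L+1:ℕ):ℂ) * ((4*L+1:ℕ):ℂ) * zet L ^ (2*(m:ℤ)^2 - 4*(L:ℤ)*m) *
          TT L (2*(L:ℤ) + l - m + 2*m) := by rw [hProdIoc]
      _ = ((4*L+1:ℕ):ℂ) * ((4*L+1:ℕ):ℂ) * ((-1:ℂ)^m * zet L ^ ((((2*m)*(2*m+1)/2 : ℕ)):ℤ)) *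
          TT L (2*(L:ℤ) + m + l) := by
            rw [hphase, show (2*(L:ℤ) + l - m + 2*m) = 2*(L:ℤ) + m + l from by ring]
      _ = (-1:ℂ)^m * TT L (4*(L:ℤ) - 2*m) * (TT L (2*(L:ℤ) + m + l) * TT L (2*(L:ℤ) + m - l)) *
            poch (zet L ^ 2) (2*m) * TT L (2*(L:ℤ) + l - m) := by
            rw [poch_2m]
            linear_combination
              (-((-1:ℂ)^m * zet L ^ ((((2*m)*(2*m+1)/2 : ℕ)):ℤ) * TT L (2*(L:ℤ) + m + l) *
                TT L ((2*m:ℕ):ℤ) * TT L (4*(L:ℤ) - 2*m))) * hreflc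
              + (-((-1:ℂ)^m * zet L ^ ((((2*m)*(2*m+1)/2 : ℕ)):ℤ) * TT L (2*(L:ℤ) + m + l) *
                ((4*L+1:ℕ):ℂ))) * hrefl2m
  · -- degenerate case : both sides vanish
    push_neg at hc
    have hzero : (∏ s ∈ Finset.Ioc (2*(L:ℤ) + l - m) (2*(L:ℤ) + l - m + 2*m), ff L s) = 0 := by
      apply Finset.prod_eq_zero (i := (0:ℤ))
      · simp only [Finset.mem_Ioc]
        omega
      · exact ff_zero L
    have hS : (∑ k ∈ Finset.Icc (-(m:ℤ)) (m:ℤ),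
        zet L ^ (-(2*k*l)) * (TT L (4*(L:ℤ) - m + k) * TT L (4*(L:ℤ) - m - k))) = 0 := by
      have h0 := hsum
      rw [hzero, mul_zero, mul_zero] at h0
      rcases mul_eq_zero.mp h0 with h | h
      · exact h
      · exact absurd h hPm
    rw [hS, TT_eq_zero L (2*(L:ℤ) + m - l) (by push_cast; omega)]
    ring

lemma S_eq_zero' (L : ℕ) (M : ℕ) (hM : 4*L+1 ≤ M) : S (4*L+1) M = 0 := by
  apply Finset.prod_eq_zero (i := 4*L+1)
  · simp only [Finset.mem_Icc]; omega
  · have : Real.pi * (4*L+1 : ℕ) / ((4*L+1 : ℕ):ℝ) = Real.pi := by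
      rw [mul_div_assoc, div_self (by positivity : ((4*L+1:ℕ):ℝ) ≠ 0), mul_one]
    push_cast at this ⊢
    rw [this, Real.sin_pi, mul_zero]

lemma S_pos (L : ℕ) (M : ℕ) (hM : M ≤ 4*L) : 0 < S (4*L+1) M := by
  apply Finset.prod_pos
  intro j hj
  simp only [Finset.mem_Icc] at hj
  push_cast
  have h1 : (0:ℝ) < Real.pi * j / (4*L+1) := by
    apply div_pos
    · have : (0:ℝ) < (j:ℝ) := by exact_mod_cast hj.1
      positivity
    · positivity
  have h2 : Real.pi * j / (4*L+1) < Real.pi := by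
    rw [div_lt_iff₀ (by positivity)]
    have hj4 : (j:ℝ) < 4*L+1 := by
      have : j < 4*L+1 := by omega
      exact_mod_cast this
    nlinarith [Real.pi_pos]
  have := Real.sin_pos_of_pos_of_lt_pi h1 h2
  linarith

lemma S_cast (L : ℕ) (M : ℕ) : ((S (4*L+1) M : ℝ) : ℂ) = (-Complex.I)^M * TT L (M:ℤ) := by
  rw [S, Complex.ofReal_prod]
  have h1 : ∀ j ∈ Finset.Icc 1 M, ((2 * Real.sin (Real.pi * (j:ℕ) / ((4*L+1:ℕ):ℝ)) : ℝ) : ℂ)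
      = (-Complex.I) * ff L ((j:ℕ):ℤ) := by
    intro j _
    have := neg_I_ff L ((j:ℕ):ℤ)
    push_cast at this ⊢
    rw [← this]
  rw [Finset.prod_congr rfl h1, Finset.prod_mul_distrib, Finset.prod_const, Nat.card_Icc]
  have hcard : M + 1 - 1 = M := by omega
  rw [hcard]
  congr 1
  refine Finset.prod_nbij' (fun j => (j:ℤ)) (fun z => z.toNat) ?_ ?_ ?_ ?_ ?_
  · intro a ha; simp only [Finset.mem_Icc] at ha; simp only [Finset.mem_Ioc]; omega
  · intro a ha; simp only [Finset.mem_Ioc] at ha; simp only [Finset.mem_Icc]; omega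
  · intro a ha; simp only [Finset.mem_Icc] at ha; omega
  · intro a ha; simp only [Finset.mem_Ioc] at ha; omega
  · intro a _; rfl

lemma neg_I_sq : ((-Complex.I))^2 = -1 := by
  rw [neg_pow, Complex.I_sq]
  norm_num

lemma exp_eq_zet (L : ℕ) (k l : ℤ) :
    Complex.exp (-2*Real.pi*Complex.I*k*l/((4*L+1:ℕ):ℂ)) = zet L ^ (-(2*k*l)) := by
  rw [zet_zpow_exp]
  congr 1
  have h : ((4*L+1:ℕ):ℂ) ≠ 0 := Nat.cast_ne_zero.mpr (by omega)
  push_cast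
  ring

lemma S_refl (L : ℕ) (M : ℕ) (hM : M ≤ 4*L) :
    S (4*L+1) M * S (4*L+1) (4*L - M) = ((4*L+1:ℕ):ℝ) := by
  have hc : ((S (4*L+1) M * S (4*L+1) (4*L - M) : ℝ):ℂ) = (((4*L+1:ℕ):ℝ):ℂ) := by
    rw [Complex.ofReal_mul, S_cast, S_cast]
    have h1 : TT L ((M:ℕ):ℤ) * TT L (((4*L - M:ℕ)):ℤ) = ((4*L+1:ℕ):ℂ) := by
      have := TT_refl L (M:ℤ) (by positivity) (by exact_mod_cast hM)
      rw [show (4*(L:ℤ) - (M:ℤ)) = (((4*L - M : ℕ)):ℤ) from by push_cast; omega] at this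
      exact this
    have h2 : ((-Complex.I))^M * ((-Complex.I))^(4*L-M) = 1 := by
      rw [← pow_add, show M + (4*L - M) = 4*L from by omega, show 4*L = 2*(2*L) from by ring,
        pow_mul, neg_I_sq, pow_mul]
      norm_num
    calc (-Complex.I)^M * TT L (M:ℤ) * ((-Complex.I)^(4*L-M) * TT L ((4*L-M:ℕ):ℤ))
        = ((-Complex.I)^M * (-Complex.I)^(4*L-M)) * (TT L (M:ℤ) * TT L ((4*L-M:ℕ):ℤ)) := by ring
      _ = 1 * ((4*L+1:ℕ):ℂ) := by rw [h1, h2]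
      _ = _ := by push_cast; ring
  exact_mod_cast hc

lemma Iset_eq (L : ℕ) : Iset (4*L+1) = Finset.Icc (-(2*(L:ℤ))) (2*(L:ℤ)) := by
  unfold Iset
  congr 1
  · rw [show (4*L+1+1)/2 = 2*L+1 from by omega]
    push_cast
    ring
  · rw [show (4*L+1+1)/2 = 2*L+1 from by omega]
    push_cast
    ring

lemma toNat_cast (z : ℤ) (h : 0 ≤ z) : ((z.toNat : ℕ) : ℤ) = z := Int.toNat_of_nonneg h

lemma dft_u (L : ℕ) (n : ℤ) (hn1 : -(L:ℤ) ≤ n) (hn2 : n ≤ L)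
    (l : ℤ) (hl1 : -(2*(L:ℤ)) ≤ l) (hl2 : l ≤ 2*(L:ℤ)) :
    ∑ k ∈ Finset.Icc (-(2*(L:ℤ))) (2*(L:ℤ)),
        Complex.exp (-2*Real.pi*Complex.I*k*l/((4*L+1:ℕ):ℂ)) * ((uvec L n k : ℝ) : ℂ)
    = ((S (4*L+1) (2*(L:ℤ)+2*n).toNat : ℝ) : ℂ) * ((uvec L (-n) l : ℝ):ℂ) := by
  set m : ℕ := ((L:ℤ) - n).toNat with hmdef
  have hm : (m:ℤ) = (L:ℤ) - n := Int.toNat_of_nonneg (by omega)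
  have hm2 : m ≤ 2*L := by omega
  set u : ℕ := ((3*(L:ℤ)) + n).toNat with hudef
  have hu : (u:ℤ) = 3*(L:ℤ) + n := Int.toNat_of_nonneg (by omega)
  -- termwise conversion of the LHS
  have hlhs : ∀ k ∈ Finset.Icc (-(2*(L:ℤ))) (2*(L:ℤ)),
      Complex.exp (-2*Real.pi*Complex.I*k*l/((4*L+1:ℕ):ℂ)) * ((uvec L n k : ℝ) : ℂ)
      = (-1:ℂ)^u * (zet L ^ (-(2*k*l)) * (TT L (4*(L:ℤ) - m + k) * TT L (4*(L:ℤ) - m - k))) := by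
    intro k hk
    simp only [Finset.mem_Icc] at hk
    rw [exp_eq_zet, uvec]
    rw [Complex.ofReal_mul, S_cast, S_cast]
    have ha : ((3*(L:ℤ) + n + k).toNat : ℤ) = 4*(L:ℤ) - m + k := by omega
    have hb : ((3*(L:ℤ) + n - k).toNat : ℤ) = 4*(L:ℤ) - m - k := by omega
    rw [show ((3*↑L + n + k).toNat : ℤ) = 4*(L:ℤ) - m + k from ha,
        show ((3*↑L + n - k).toNat : ℤ) = 4*(L:ℤ) - m - k from hb]
    have hsign : (-Complex.I)^((3*(L:ℤ) + n + k).toNat) * (-Complex.I)^((3*(L:ℤ) + n - k).toNat)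
        = (-1:ℂ)^u := by
      rw [← pow_add, show (3*(L:ℤ) + n + k).toNat + (3*(L:ℤ) + n - k).toNat = 2*u from by omega,
        pow_mul, neg_I_sq]
    calc zet L ^ (-(2*k*l)) * ((-Complex.I)^((3*(L:ℤ) + n + k).toNat) * TT L (4*(L:ℤ) - m + k) *
            ((-Complex.I)^((3*(L:ℤ) + n - k).toNat) * TT L (4*(L:ℤ) - m - k)))
        = ((-Complex.I)^((3*(L:ℤ) + n + k).toNat) * (-Complex.I)^((3*(L:ℤ) + n - k).toNat)) *
          (zet L ^ (-(2*k*l)) * (TT L (4*(L:ℤ) - m + k) * TT L (4*(L:ℤ) - m - k))) := by ring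
      _ = _ := by rw [hsign]
  rw [Finset.sum_congr rfl hlhs, ← Finset.mul_sum, main_T L m hm2 l hl1 hl2]
  -- now convert the RHS
  rw [uvec, Complex.ofReal_mul, S_cast, S_cast, S_cast]
  have hc1 : ((2*(L:ℤ)+2*n).toNat : ℤ) = 4*(L:ℤ) - 2*m := by omega
  have hc2 : ((3*(L:ℤ) - n + l).toNat : ℤ) = 2*(L:ℤ) + m + l := by omega
  have hc3 : ((3*(L:ℤ) - n - l).toNat : ℤ) = 2*(L:ℤ) + m - l := by omega
  rw [show (((2*(L:ℤ)+2*n).toNat : ℕ) : ℤ) = 4*(L:ℤ) - 2*m from hc1,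
    show ((3*↑L + -n + l).toNat : ℤ) = 2*(L:ℤ) + m + l from by omega,
    show ((3*↑L + -n - l).toNat : ℤ) = 2*(L:ℤ) + m - l from by omega]
  have hsign2 : (-Complex.I)^((2*(L:ℤ)+2*n).toNat) * ((-Complex.I)^((3*(L:ℤ) + -n + l).toNat) *
      (-Complex.I)^((3*(L:ℤ) + -n - l).toNat)) = 1 := by
    rw [← pow_add, ← pow_add,
      show (2*(L:ℤ)+2*n).toNat + ((3*(L:ℤ) + -n + l).toNat + (3*(L:ℤ) + -n - l).toNat) = 2*(4*L) from by omega,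
      pow_mul, neg_I_sq, pow_mul]
    norm_num
  have hsign3 : (-1:ℂ)^u * (-1:ℂ)^m = 1 := by
    rw [← pow_add, show u + m = 2*(2*L) from by omega, pow_mul]
    norm_num
  calc (-1:ℂ)^u * ((-1:ℂ)^m * TT L (4*(L:ℤ) - 2*m) * (TT L (2*(L:ℤ) + m + l) * TT L (2*(L:ℤ) + m - l)))
      = ((-1:ℂ)^u * (-1:ℂ)^m) * (TT L (4*(L:ℤ) - 2*m) * (TT L (2*(L:ℤ) + m + l) * TT L (2*(L:ℤ) + m - l))) := by
        ring
    _ = TT L (4*(L:ℤ) - 2*m) * (TT L (2*(L:ℤ) + m + l) * TT L (2*(L:ℤ) + m - l)) := by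
        rw [hsign3, one_mul]
    _ = _ := by
        rw [show ((-Complex.I)^((2*(L:ℤ)+2*n).toNat) * TT L (4*(L:ℤ) - 2*m) *
              ((-Complex.I)^((3*(L:ℤ) + -n + l).toNat) * TT L (2*(L:ℤ) + m + l) *
                ((-Complex.I)^((3*(L:ℤ) + -n - l).toNat) * TT L (2*(L:ℤ) + m - l))))
            = ((-Complex.I)^((2*(L:ℤ)+2*n).toNat) * ((-Complex.I)^((3*(L:ℤ) + -n + l).toNat) *
                (-Complex.I)^((3*(L:ℤ) + -n - l).toNat))) *
              (TT L (4*(L:ℤ) - 2*m) * (TT L (2*(L:ℤ) + m + l) * TT L (2*(L:ℤ) + m - l))) from by ring,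
          hsign2, one_mul]

lemma sqrtN_pos (L : ℕ) : 0 < Real.sqrt ((4*L+1:ℕ):ℝ) :=
  Real.sqrt_pos.mpr (by positivity)

lemma part1 (L : ℕ) (n : ℤ) (hn0 : 0 ≤ n) (hnL : n ≤ (L:ℤ)) (l : ℤ) (hl : l ∈ Iset (4*L+1)) :
    dft (4*L+1) (fun k => (wvec L n k : ℂ)) l = (wvec L n l : ℂ) := by
  rw [Iset_eq] at hl
  simp only [Finset.mem_Icc] at hl
  obtain ⟨hl1, hl2⟩ := hl
  unfold dft
  rw [Iset_eq]
  have hsplit : ∀ k ∈ Finset.Icc (-(2*(L:ℤ))) (2*(L:ℤ)),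
      Complex.exp (-2*Real.pi*Complex.I*k*l/((4*L+1:ℕ):ℂ)) * ((wvec L n k : ℝ):ℂ)
      = Complex.exp (-2*Real.pi*Complex.I*k*l/((4*L+1:ℕ):ℂ)) * ((uvec L n k : ℝ):ℂ)
        + (((Real.sqrt (4*(L:ℝ)+1))⁻¹ * S (4*L+1) (2*(L:ℤ)+2*n).toNat : ℝ):ℂ) *
          (Complex.exp (-2*Real.pi*Complex.I*k*l/((4*L+1:ℕ):ℂ)) * ((uvec L (-n) k : ℝ):ℂ)) := by
    intro k _
    rw [wvec]
    push_cast
    ring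
  rw [Finset.sum_congr rfl hsplit, Finset.sum_add_distrib, ← Finset.mul_sum,
    dft_u L n (by omega) hnL l hl1 hl2, dft_u L (-n) (by omega) (by omega) l hl1 hl2, neg_neg]
  have harg : (2*(L:ℤ)+2*(-n)).toNat = 4*L - (2*(L:ℤ)+2*n).toNat := by omega
  rw [harg]
  have hM : (2*(L:ℤ)+2*n).toNat ≤ 4*L := by omega
  have hSS := S_refl L ((2*(L:ℤ)+2*n).toNat) hM
  have hsq : Real.sqrt ((4*L+1:ℕ):ℝ) * Real.sqrt ((4*L+1:ℕ):ℝ) = ((4*L+1:ℕ):ℝ) :=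
    Real.mul_self_sqrt (by positivity)
  have hsne : Real.sqrt ((4*L+1:ℕ):ℝ) ≠ 0 := ne_of_gt (sqrtN_pos L)
  have hcast : (4*(L:ℝ)+1) = ((4*L+1:ℕ):ℝ) := by push_cast; ring
  have hreal : (Real.sqrt ((4*L+1:ℕ):ℝ))⁻¹ *
      (S (4*L+1) ((2*(L:ℤ)+2*n).toNat) * uvec L (-n) l
        + ((Real.sqrt (4*(L:ℝ)+1))⁻¹ * S (4*L+1) (2*(L:ℤ)+2*n).toNat) *
          (S (4*L+1) (4*L - (2*(L:ℤ)+2*n).toNat) * uvec L n l))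
      = wvec L n l := by
    rw [wvec, hcast]
    have hkey : (Real.sqrt ((4*L+1:ℕ):ℝ))⁻¹ * (Real.sqrt ((4*L+1:ℕ):ℝ))⁻¹ *
        (S (4*L+1) ((2*(L:ℤ)+2*n).toNat) * S (4*L+1) (4*L - (2*(L:ℤ)+2*n).toNat)) = 1 := by
      rw [hSS, ← mul_inv, inv_mul_eq_one₀ (mul_ne_zero hsne hsne), hsq]
    linear_combination (uvec L n l) * hkey
  calc ((Real.sqrt ((4*L+1:ℕ):ℝ)):ℂ)⁻¹ *
        (((S (4*L+1) ((2*(L:ℤ)+2*n).toNat) : ℝ):ℂ) * ((uvec L (-n) l : ℝ):ℂ)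
          + (((Real.sqrt (4*(L:ℝ)+1))⁻¹ * S (4*L+1) (2*(L:ℤ)+2*n).toNat : ℝ):ℂ) *
            (((S (4*L+1) (4*L - (2*(L:ℤ)+2*n).toNat) : ℝ):ℂ) * ((uvec L n l : ℝ):ℂ)))
      = (((Real.sqrt ((4*L+1:ℕ):ℝ))⁻¹ *
        (S (4*L+1) ((2*(L:ℤ)+2*n).toNat) * uvec L (-n) l
          + ((Real.sqrt (4*(L:ℝ)+1))⁻¹ * S (4*L+1) (2*(L:ℤ)+2*n).toNat) *
            (S (4*L+1) (4*L - (2*(L:ℤ)+2*n).toNat) * uvec L n l)) : ℝ) : ℂ) := by push_cast; ring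
    _ = _ := by rw [hreal]

lemma uvec_zero_hi (L : ℕ) (n k : ℤ) (h : (L:ℤ) - n < k) : uvec L n k = 0 := by
  rw [uvec, S_eq_zero' L _ (by omega), zero_mul]

lemma wvec_supp (L : ℕ) (i j : ℕ) (hj : j < i) (hi : i ≤ L) :
    wvec L (j:ℤ) ((L:ℤ)+i) = 0 := by
  rw [wvec, uvec_zero_hi L (j:ℤ) _ (by omega), uvec_zero_hi L (-(j:ℤ)) _ (by omega)]
  ring

lemma wvec_diag_pos (L : ℕ) (i : ℕ) (hi : i ≤ L) : 0 < wvec L (i:ℤ) ((L:ℤ)+i) := by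
  rw [wvec]
  have hc : 0 < (Real.sqrt (4*(L:ℝ)+1))⁻¹ * S (4*L+1) (2*(L:ℤ)+2*(i:ℤ)).toNat := by
    apply mul_pos
    · rw [inv_pos]
      apply Real.sqrt_pos.mpr
      positivity
    · exact S_pos L _ (by omega)
  have hv : 0 < uvec L (-(i:ℤ)) ((L:ℤ)+i) := by
    rw [uvec]
    apply mul_pos
    · exact S_pos L _ (by omega)
    · exact S_pos L _ (by omega)
  rcases Nat.eq_zero_or_pos i with h0 | h0
  · subst h0
    have hu : 0 < uvec L ((0:ℕ):ℤ) ((L:ℤ)+(0:ℕ)) := by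
      rw [uvec]
      apply mul_pos
      · exact S_pos L _ (by omega)
      · exact S_pos L _ (by omega)
    push_cast at hu hv hc ⊢
    nlinarith [hu, hv, hc]
  · have hu : uvec L ((i:ℕ):ℤ) ((L:ℤ)+i) = 0 := uvec_zero_hi L _ _ (by omega)
    rw [hu, zero_add]
    exact mul_pos hc hv

lemma linind_real (L : ℕ) : LinearIndependent ℝ (fun n : Fin (L + 1) =>
    (fun k : {k : ℤ // k ∈ Iset (4 * L + 1)} => wvec L (n : ℤ) k.1)) := by
  rw [Fintype.linearIndependent_iff]
  intro g hg
  have key : ∀ i : Fin (L+1), (∀ j : Fin (L+1), i < j → g j = 0) → g i = 0 := by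
    intro i hup
    have hkmem : ((L:ℤ) + i.1) ∈ Iset (4*L+1) := by
      rw [Iset_eq]
      simp only [Finset.mem_Icc]
      omega
    have heval := congrFun hg ⟨(L:ℤ)+i.1, hkmem⟩
    simp only [Finset.sum_apply, Pi.smul_apply, smul_eq_mul, Pi.zero_apply] at heval
    rw [Finset.sum_eq_single i] at heval
    · have hpos := wvec_diag_pos L i.1 (by omega)
      rcases mul_eq_zero.mp heval with h | h
      · exact h
      · exact absurd h (ne_of_gt hpos)
    · intro j _ hji
      rcases lt_or_gt_of_ne hji with hlt | hgt
      · -- j < i : wvec vanishes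
        have := wvec_supp L i.1 j.1 (by exact_mod_cast hlt) (by omega)
        rw [this, mul_zero]
      · rw [hup j hgt, zero_mul]
    · intro h
      exact absurd (Finset.mem_univ i) h
  have all : ∀ d : ℕ, ∀ i : Fin (L+1), L - i.1 = d → g i = 0 := by
    intro d
    induction d using Nat.strong_induction_on with
    | _ d ih =>
      intro i hi
      apply key
      intro j hj
      exact ih (L - j.1) (by omega) j (by omega)
  intro i
  exact all (L - i.1) i rfl

lemma part3 (L : ℕ) :
    L + 1 ≤ Module.finrank ℂ (Module.End.eigenspace (Fop (4 * L + 1)) 1) := by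
  classical
  set v : Fin (L+1) → ({k : ℤ // k ∈ Iset (4*L+1)} → ℂ) :=
    fun n => (fun k => ((wvec L (n:ℤ) k.1 : ℝ):ℂ)) with hv
  have hmem : ∀ n : Fin (L+1), v n ∈ Module.End.eigenspace (Fop (4*L+1)) 1 := by
    intro n
    rw [Module.End.mem_eigenspace_iff]
    funext l
    show (Real.sqrt ((4*L+1:ℕ)) : ℂ)⁻¹ *
        ∑ k : {k : ℤ // k ∈ Iset (4*L+1)},
          Complex.exp (-2 * Real.pi * Complex.I * k.1 * l.1 / (4*L+1:ℕ)) * v n k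
      = (1 • v n) l
    have hsum : ∑ k : {k : ℤ // k ∈ Iset (4*L+1)},
        Complex.exp (-2 * Real.pi * Complex.I * k.1 * l.1 / (4*L+1:ℕ)) * v n k
        = ∑ k ∈ Iset (4*L+1),
          Complex.exp (-2 * Real.pi * Complex.I * k * l.1 / (4*L+1:ℕ)) * ((wvec L (n:ℤ) k : ℝ):ℂ) :=
      Finset.sum_coe_sort (Iset (4*L+1))
        (fun k => Complex.exp (-2 * Real.pi * Complex.I * k * l.1 / (4*L+1:ℕ)) * ((wvec L (n:ℤ) k : ℝ):ℂ))
    rw [hsum]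
    have hdft := part1 L (n:ℤ) (by positivity) (by exact_mod_cast Nat.lt_succ_iff.mp n.2) l.1 l.2
    unfold dft at hdft
    rw [hdft]
    simp [hv]
  set gE : Fin (L+1) → (Module.End.eigenspace (Fop (4*L+1)) 1) := fun n => ⟨v n, hmem n⟩ with hgE
  have hlc : LinearIndependent ℂ v := by
    rw [Fintype.linearIndependent_iff]
    intro c hc
    have h1 : ∀ (pt : {k : ℤ // k ∈ Iset (4*L+1)}),
        ∑ j : Fin (L+1), c j * ((wvec L (j:ℤ) pt.1 : ℝ):ℂ) = 0 := by
      intro pt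
      have := congrFun hc pt
      simpa [hv, Finset.sum_apply, Pi.smul_apply, smul_eq_mul] using this
    have hR := Fintype.linearIndependent_iff.mp (linind_real L)
    have hre : ∀ j, (c j).re = 0 := by
      apply hR
      funext pt
      have h2 := congrArg Complex.re (h1 pt)
      rw [Complex.re_sum] at h2
      simpa [Complex.mul_re, Finset.sum_apply, Pi.smul_apply, smul_eq_mul] using h2
    have him : ∀ j, (c j).im = 0 := by
      apply hR
      funext pt
      have h2 := congrArg Complex.im (h1 pt)
      rw [Complex.im_sum] at h2
      simpa [Complex.mul_im, Finset.sum_apply, Pi.smul_apply, smul_eq_mul] using h2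
    intro j
    exact Complex.ext (hre j) (him j)
  have hgind : LinearIndependent ℂ gE := by
    apply LinearIndependent.of_comp (Module.End.eigenspace (Fop (4*L+1)) 1).subtype
    exact hlc
  have hcard := hgind.fintype_card_le_finrank
  simpa using hcard

end St14

theorem stmt14 (L : ℕ) (hL : 1 ≤ L) :
    (∀ n : ℤ, 0 ≤ n → n ≤ L → ∀ l ∈ Iset (4 * L + 1),
        dft (4 * L + 1) (fun k => (wvec L n k : ℂ)) l = (wvec L n l : ℂ)) ∧
    LinearIndependent ℝ (fun n : Fin (L + 1) =>
      (fun k : {k : ℤ // k ∈ Iset (4 * L + 1)} => wvec L (n : ℤ) k.1)) ∧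
    L + 1 ≤ Module.finrank ℂ (Module.End.eigenspace (Fop (4 * L + 1)) 1) :=
  ⟨fun n hn0 hnL l hl => St14.part1 L n hn0 hnL l hl, St14.linind_real L, St14.part3 L⟩
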